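/- For all integers n and t with 0 < t < n and every natural number l with l ≤ binom(n,t), the single-exclusion number satisfies S(n,t) ≤ l + Σ_{i=1}^{t+1} binom(n,i)·Π_{j=0}^{l−1} ( 1 − i·binom(n−i, t−i+1)/(binom(n,t)−j) )^+ , where (x)^+ = max{x, 0} and binom(a,b) denotes the binomial coefficient (equal to 0 when b < 0 or b > a). -/

import Mathlib

/-- An `(n,t)`-single-exclusion system: a collection of `t`-subsets (blocks) of an
`n`-set such that every subset `X` with `1 ≤ |X| ≤ t+1` has a block containing all
but exactly one element of `X`. -/
def IsSESystem (n t : ℕ) (S : Finset (Finset (Fin n))) : Prop :=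
  (∀ B ∈ S, B.card = t) ∧
  ∀ X : Finset (Fin n), 1 ≤ X.card → X.card ≤ t + 1 → ∃ B ∈ S, (X \ B).card = 1

/-- The `(n,t)`-single-exclusion number `S(n,t)`: the least number of blocks in an
`(n,t)`-single-exclusion system. -/
noncomputable def SENumber (n t : ℕ) : ℕ :=
  sInf {m : ℕ | ∃ S : Finset (Finset (Fin n)), IsSESystem n t S ∧ S.card = m}

open Finset Nat

private def blocksU (n t : ℕ) : Finset (Finset (Fin n)) :=
  Finset.powersetCard t Finset.univ

private def coverB (n t : ℕ) (X : Finset (Fin n)) : Finset (Finset (Fin n)) :=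
  (blocksU n t).filter (fun B => (X \ B).card = 1)

private lemma blocksU_card (n t : ℕ) : (blocksU n t).card = n.choose t := by
  rw [blocksU, card_powersetCard, Finset.card_univ, Fintype.card_fin]

private lemma choose_ratio_bound (L a l : ℕ) (hl : l ≤ L) :
    ((L - a).choose l : ℝ) ≤ (L.choose l : ℝ) *
      ∏ j ∈ range l, max (1 - (a : ℝ) / ((L : ℝ) - (j : ℝ))) 0 := by
  have hfac : (0:ℝ) < (l ! : ℝ) := by exact_mod_cast Nat.factorial_pos l
  rw [← mul_le_mul_iff_of_pos_right hfac]
  have e1 : ((L - a).choose l : ℝ) * (l ! : ℝ) = ((L - a).descFactorial l : ℝ) := by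
    rw [Nat.descFactorial_eq_factorial_mul_choose]; push_cast; ring
  have e2 : (L.choose l : ℝ) * (l ! : ℝ) = (L.descFactorial l : ℝ) := by
    rw [Nat.descFactorial_eq_factorial_mul_choose]; push_cast; ring
  calc ((L - a).choose l : ℝ) * (l ! : ℝ) = ((L - a).descFactorial l : ℝ) := e1
    _ ≤ (L.descFactorial l : ℝ) * ∏ j ∈ range l, max (1 - (a : ℝ) / ((L : ℝ) - (j : ℝ))) 0 := by
        rw [Nat.descFactorial_eq_prod_range, Nat.descFactorial_eq_prod_range]
        push_cast
        rw [← prod_mul_distrib]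
        apply prod_le_prod
        · intro j _; positivity
        · intro j hj
          have hjl : j < l := mem_range.mp hj
          have hjL : j < L := lt_of_lt_of_le hjl hl
          have hLj : ((L - j : ℕ) : ℝ) = (L : ℝ) - (j : ℝ) := by
            rw [Nat.cast_sub hjL.le]
          have hpos : (0:ℝ) < (L : ℝ) - (j : ℝ) := by
            have : (j:ℝ) < (L:ℝ) := by exact_mod_cast hjL
            linarith
          rw [hLj]
          rcases le_or_gt (L - j) a with h | h
          · have h0 : L - a - j = 0 := by omega
            rw [h0]
            have : (0:ℝ) ≤ ((L:ℝ) - (j:ℝ)) * max (1 - (a:ℝ)/((L:ℝ)-(j:ℝ))) 0 := by positivity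
            simpa using this
          · have haj : a + j < L := by omega
            have hlt : (a:ℝ) < (L:ℝ) - (j:ℝ) := by
              have : (a:ℝ) + (j:ℝ) < (L:ℝ) := by exact_mod_cast haj
              linarith
            have hmax : max (1 - (a:ℝ)/((L:ℝ)-(j:ℝ))) 0 = 1 - (a:ℝ)/((L:ℝ)-(j:ℝ)) := by
              rw [max_eq_left]
              have hd : (a:ℝ)/((L:ℝ)-(j:ℝ)) < 1 := (div_lt_one hpos).mpr hlt
              linarith
            rw [hmax]
            have hc : ((L - a - j : ℕ) : ℝ) = (L:ℝ) - (a:ℝ) - (j:ℝ) := by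
              have h1 : a ≤ L := by omega
              have h2 : j ≤ L - a := by omega
              rw [Nat.cast_sub h2, Nat.cast_sub h1]
            have hr : ((L:ℝ) - (j:ℝ)) * (1 - (a:ℝ)/((L:ℝ)-(j:ℝ))) = (L:ℝ) - (j:ℝ) - (a:ℝ) := by
              field_simp
            rw [hc, hr]
            linarith
    _ = (L.choose l : ℝ) * (∏ j ∈ range l, max (1 - (a : ℝ) / ((L : ℝ) - (j : ℝ))) 0) * (l ! : ℝ) := by
        rw [← e2]; ring

private lemma gcard_ge (n t : ℕ) (X : Finset (Fin n))
    (h1 : 1 ≤ X.card) (h2 : X.card ≤ t + 1) :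
    X.card * (n - X.card).choose (t + 1 - X.card) ≤ (coverB n t X).card := by
  classical
  rw [coverB, blocksU]
  set s := X ×ˢ (Finset.powersetCard (t + 1 - X.card) (Finset.univ \ X)) with hs
  have hscard : s.card = X.card * (n - X.card).choose (t + 1 - X.card) := by
    rw [hs, card_product, card_powersetCard, card_sdiff_of_subset (subset_univ X), Finset.card_univ,
      Fintype.card_fin]
  rw [← hscard]
  apply Finset.card_le_card_of_injOn (fun p => (X.erase p.1) ∪ p.2)
  · rintro ⟨x, Z⟩ hp
    simp only [hs, Finset.mem_coe, mem_product, mem_powersetCard] at hp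
    obtain ⟨hx, hZsub, hZcard⟩ : x ∈ X ∧ Z ⊆ Finset.univ \ X ∧ Z.card = t + 1 - X.card :=
      ⟨hp.1, hp.2.1, hp.2.2⟩
    have hdisj : Disjoint (X.erase x) Z := by
      apply Finset.disjoint_left.mpr
      intro a ha haZ
      have := hZsub haZ
      simp only [mem_sdiff] at this
      exact this.2 (mem_of_mem_erase ha)
    have hXZ : ∀ a ∈ X, a ∉ Z := by
      intro a ha haZ
      have := hZsub haZ
      simp only [mem_sdiff] at this
      exact this.2 ha
    simp only [Finset.mem_coe, mem_filter, mem_powersetCard]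
    refine ⟨⟨subset_univ _, ?_⟩, ?_⟩
    · rw [card_union_of_disjoint hdisj, card_erase_of_mem hx, hZcard]
      omega
    · have hXd : X \ (X.erase x ∪ Z) = {x} := by
        ext a
        simp only [mem_sdiff, mem_union, Finset.mem_erase, mem_singleton]
        constructor
        · rintro ⟨haX, hnot⟩
          by_contra hne
          exact hnot (Or.inl ⟨hne, haX⟩)
        · rintro rfl
          exact ⟨hx, by rintro (⟨hne, _⟩ | hZ); exact hne rfl; exact hXZ _ hx hZ⟩
      rw [hXd, card_singleton]
  · rintro ⟨x, Z⟩ hp ⟨x', Z'⟩ hp' heq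
    simp only [hs, Finset.mem_coe, mem_product, mem_powersetCard, Set.mem_setOf_eq] at hp hp' heq
    obtain ⟨hx, hZsub, hZcard⟩ : x ∈ X ∧ Z ⊆ Finset.univ \ X ∧ Z.card = t + 1 - X.card :=
      ⟨hp.1, hp.2.1, hp.2.2⟩
    obtain ⟨hx', hZ'sub, hZ'card⟩ : x' ∈ X ∧ Z' ⊆ Finset.univ \ X ∧ Z'.card = t + 1 - X.card :=
      ⟨hp'.1, hp'.2.1, hp'.2.2⟩
    have hXZ : ∀ a ∈ Z, a ∉ X := fun a haZ => by
      have := hZsub haZ; simp only [mem_sdiff] at this; exact this.2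
    have hXZ' : ∀ a ∈ Z', a ∉ X := fun a haZ => by
      have := hZ'sub haZ; simp only [mem_sdiff] at this; exact this.2
    have hBX : ∀ (y : Fin n) (W : Finset (Fin n)), y ∈ X → (∀ a ∈ W, a ∉ X) →
        (X.erase y ∪ W) \ X = W := by
      intro y W hy hW
      ext a
      simp only [mem_sdiff, mem_union, Finset.mem_erase]
      constructor
      · rintro ⟨(⟨_, haX⟩ | haW), hnX⟩
        · exact absurd haX hnX
        · exact haW
      · intro haW
        exact ⟨Or.inr haW, hW a haW⟩
    have hXB : ∀ (y : Fin n) (W : Finset (Fin n)), y ∈ X → (∀ a ∈ W, a ∉ X) →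
        X \ (X.erase y ∪ W) = {y} := by
      intro y W hy hW
      ext a
      simp only [mem_sdiff, mem_union, Finset.mem_erase, mem_singleton]
      constructor
      · rintro ⟨haX, hnot⟩
        by_contra hne
        exact hnot (Or.inl ⟨hne, haX⟩)
      · rintro rfl
        exact ⟨hy, by rintro (⟨hne, _⟩ | hW'); exact hne rfl; exact hW _ hW' hy⟩
    have hx_eq : x = x' := by
      have e1 := hXB x Z hx hXZ
      have e2 := hXB x' Z' hx' hXZ'
      have : ({x} : Finset (Fin n)) = {x'} := by rw [← e1, ← e2, heq]
      simpa using this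
    have hZ_eq : Z = Z' := by
      have e1 := hBX x Z hx hXZ
      have e2 := hBX x' Z' hx' hXZ'
      rw [← e1, ← e2, heq]
    simp [hx_eq, hZ_eq]

private lemma avg_step (n t l : ℕ) (hl : l ≤ n.choose t)
    (𝒳 : Finset (Finset (Fin n))) :
    ∃ T ∈ Finset.powersetCard l (blocksU n t),
      (𝒳.filter (fun X => ∀ B ∈ T, (X \ B).card ≠ 1)).card * (n.choose t).choose l ≤
        ∑ X ∈ 𝒳, ((n.choose t) - (coverB n t X).card).choose l := by
  classical
  set U := blocksU n t with hU
  have hUcard : U.card = n.choose t := blocksU_card n t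
  set s := Finset.powersetCard l U with hs
  have hscard : s.card = (n.choose t).choose l := by
    rw [hs, card_powersetCard, hUcard]
  have hsne : s.Nonempty := by
    obtain ⟨T, hT, hTcard⟩ := Finset.exists_subset_card_eq (hUcard ▸ hl : l ≤ U.card)
    exact ⟨T, mem_powersetCard.mpr ⟨hT, hTcard⟩⟩
  have hdouble : ∑ T ∈ s, (𝒳.filter (fun X => ∀ B ∈ T, (X \ B).card ≠ 1)).card =
      ∑ X ∈ 𝒳, ((n.choose t) - (coverB n t X).card).choose l := by
    have : ∀ T ∈ s, (𝒳.filter (fun X => ∀ B ∈ T, (X \ B).card ≠ 1)).card =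
        ∑ X ∈ 𝒳, if (∀ B ∈ T, (X \ B).card ≠ 1) then 1 else 0 := by
      intro T _
      rw [Finset.card_filter]
    rw [Finset.sum_congr rfl this, Finset.sum_comm]
    apply Finset.sum_congr rfl
    intro X _
    rw [← Finset.card_filter]
    have hfe : s.filter (fun T => ∀ B ∈ T, (X \ B).card ≠ 1) =
        Finset.powersetCard l (U \ coverB n t X) := by
      ext T
      simp only [mem_filter, hs, mem_powersetCard, coverB, ← hU]
      constructor
      · rintro ⟨⟨hTU, hTc⟩, hall⟩
        refine ⟨fun B hB => ?_, hTc⟩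
        simp only [mem_sdiff, mem_filter]
        exact ⟨hTU hB, fun hc => hall B hB hc.2⟩
      · rintro ⟨hTsub, hTc⟩
        refine ⟨⟨fun B hB => ?_, hTc⟩, fun B hB hc => ?_⟩
        · exact (mem_sdiff.mp (hTsub hB)).1
        · have := mem_sdiff.mp (hTsub hB)
          exact this.2 (mem_filter.mpr ⟨(mem_sdiff.mp (hTsub hB)).1, hc⟩)
    rw [hfe, card_powersetCard, card_sdiff_of_subset, hUcard]
    exact filter_subset _ _
  obtain ⟨T, hT, hmin⟩ := Finset.exists_min_image s
    (fun T => (𝒳.filter (fun X => ∀ B ∈ T, (X \ B).card ≠ 1)).card) hsne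
  refine ⟨T, hT, ?_⟩
  calc (𝒳.filter (fun X => ∀ B ∈ T, (X \ B).card ≠ 1)).card * (n.choose t).choose l
      = s.card • (𝒳.filter (fun X => ∀ B ∈ T, (X \ B).card ≠ 1)).card := by
        rw [hscard, smul_eq_mul, mul_comm]
    _ ≤ ∑ T' ∈ s, (𝒳.filter (fun X => ∀ B ∈ T', (X \ B).card ≠ 1)).card :=
        Finset.card_nsmul_le_sum s _ _ (fun T' hT' => hmin T' hT')
    _ = _ := hdouble


theorem stmt2 (n t : ℕ) (ht : 0 < t) (htn : t < n) (l : ℕ) (hl : l ≤ n.choose t) :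
    (SENumber n t : ℝ) ≤ (l : ℝ) +
      ∑ i ∈ Finset.Icc 1 (t + 1),
        (n.choose i : ℝ) *
          ∏ j ∈ Finset.range l,
            max (1 - (i * ((n - i).choose (t + 1 - i)) : ℝ) / ((n.choose t : ℝ) - (j : ℝ))) 0 := by
  classical
  set F : ℕ → ℝ := fun i =>
    ∏ j ∈ Finset.range l,
      max (1 - (i * ((n - i).choose (t + 1 - i)) : ℝ) / ((n.choose t : ℝ) - (j : ℝ))) 0 with hF
  set 𝒳 : Finset (Finset (Fin n)) :=
    (Finset.Icc 1 (t + 1)).biUnion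
      (fun i => Finset.powersetCard i (Finset.univ : Finset (Fin n))) with h𝒳
  have hmem𝒳 : ∀ X : Finset (Fin n), X ∈ 𝒳 ↔ 1 ≤ X.card ∧ X.card ≤ t + 1 := by
    intro X
    simp only [h𝒳, Finset.mem_biUnion, Finset.mem_powersetCard, Finset.mem_Icc]
    constructor
    · rintro ⟨i, ⟨hi1, hi2⟩, _, rfl⟩
      exact ⟨hi1, hi2⟩
    · rintro ⟨h1v, h2v⟩
      exact ⟨X.card, ⟨h1v, h2v⟩, subset_univ X, rfl⟩
  obtain ⟨T, hT, havg⟩ := avg_step n t l hl 𝒳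
  obtain ⟨hTU, hTcard⟩ := mem_powersetCard.mp hT
  -- nonemptiness of coverB for candidates
  have hcov_ne : ∀ X ∈ 𝒳, (coverB n t X).Nonempty := by
    intro X hX
    obtain ⟨h1v, h2v⟩ := (hmem𝒳 X).mp hX
    have hge := gcard_ge n t X h1v h2v
    have hpos : 0 < X.card * (n - X.card).choose (t + 1 - X.card) := by
      apply Nat.mul_pos h1v
      apply Nat.choose_pos
      omega
    exact card_pos.mp (lt_of_lt_of_le hpos hge)
  set fix : Finset (Fin n) → Finset (Fin n) := fun X =>
    if h : (coverB n t X).Nonempty then h.choose else ∅ with hfix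
  have hfix_mem : ∀ X ∈ 𝒳, fix X ∈ coverB n t X := by
    intro X hX
    rw [hfix]
    simp only [dif_pos (hcov_ne X hX)]
    exact Exists.choose_spec (hcov_ne X hX)
  set uncov := 𝒳.filter (fun X => ∀ B ∈ T, (X \ B).card ≠ 1) with huncov
  set S := T ∪ uncov.image fix with hS
  have hsys : IsSESystem n t S := by
    constructor
    · intro B hB
      rcases mem_union.mp hB with hB | hB
      · exact (mem_powersetCard.mp (hTU hB)).2
      · obtain ⟨X, hX, rfl⟩ := mem_image.mp hB
        have := hfix_mem X (mem_of_mem_filter X hX)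
        have := (mem_filter.mp this).1
        exact (mem_powersetCard.mp this).2
    · intro X hX1 hX2
      have hX𝒳 : X ∈ 𝒳 := (hmem𝒳 X).mpr ⟨hX1, hX2⟩
      by_cases hc : ∃ B ∈ T, (X \ B).card = 1
      · obtain ⟨B, hB, hBc⟩ := hc
        exact ⟨B, mem_union_left _ hB, hBc⟩
      · push_neg at hc
        have hXu : X ∈ uncov := mem_filter.mpr ⟨hX𝒳, hc⟩
        refine ⟨fix X, mem_union_right _ (mem_image_of_mem fix hXu), ?_⟩
        exact (mem_filter.mp (hfix_mem X hX𝒳)).2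
  have hSEle : SENumber n t ≤ S.card := Nat.sInf_le ⟨S, hsys, rfl⟩
  have hScard : S.card ≤ l + uncov.card := by
    calc S.card ≤ T.card + (uncov.image fix).card := card_union_le _ _
      _ ≤ l + uncov.card := by
          rw [hTcard]
          exact Nat.add_le_add_left card_image_le l
  have hCpos : (0:ℝ) < ((n.choose t).choose l : ℝ) := by
    exact_mod_cast Nat.choose_pos hl
  -- real bound on uncov.card
  have hub : (uncov.card : ℝ) ≤ ∑ X ∈ 𝒳, F X.card := by
    rw [← mul_le_mul_iff_of_pos_right hCpos]
    calc (uncov.card : ℝ) * ((n.choose t).choose l : ℝ)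
        ≤ (∑ X ∈ 𝒳, ((n.choose t - (coverB n t X).card).choose l : ℕ) : ℝ) := by
          exact_mod_cast havg
      _ = ∑ X ∈ 𝒳, ((n.choose t - (coverB n t X).card).choose l : ℝ) := by push_cast; rfl
      _ ≤ ∑ X ∈ 𝒳, ((n.choose t).choose l : ℝ) * F X.card := by
          apply Finset.sum_le_sum
          intro X hX
          obtain ⟨h1v, h2v⟩ := (hmem𝒳 X).mp hX
          have hge := gcard_ge n t X h1v h2v
          have step1 : ((n.choose t - (coverB n t X).card).choose l : ℝ) ≤
              ((n.choose t - X.card * (n - X.card).choose (t + 1 - X.card)).choose l : ℝ) := by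
            exact_mod_cast Nat.choose_le_choose l (Nat.sub_le_sub_left hge (n.choose t))
          refine step1.trans ?_
          have := choose_ratio_bound (n.choose t)
            (X.card * (n - X.card).choose (t + 1 - X.card)) l hl
          refine this.trans (le_of_eq ?_)
          congr 1
          rw [hF]
          apply Finset.prod_congr rfl
          intro j _
          congr 2
          push_cast
          ring
      _ = (∑ X ∈ 𝒳, F X.card) * ((n.choose t).choose l : ℝ) := by
          rw [← Finset.mul_sum]
          ring
  -- regroup the sum by cardinality
  have hgroup : ∑ X ∈ 𝒳, F X.card =
      ∑ i ∈ Finset.Icc 1 (t + 1), (n.choose i : ℝ) * F i := by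
    rw [h𝒳, Finset.sum_biUnion]
    · apply Finset.sum_congr rfl
      intro i _
      have : ∀ X ∈ Finset.powersetCard i (Finset.univ : Finset (Fin n)), F X.card = F i := by
        intro X hX
        rw [(mem_powersetCard.mp hX).2]
      rw [Finset.sum_congr rfl this, Finset.sum_const, card_powersetCard, Finset.card_univ,
        Fintype.card_fin, nsmul_eq_mul]
    · intro i hi j hj hij
      simp only [Function.onFun]
      apply Finset.disjoint_left.mpr
      intro X hXi hXj
      exact hij ((mem_powersetCard.mp hXi).2 ▸ (mem_powersetCard.mp hXj).2 ▸ rfl)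
  calc (SENumber n t : ℝ) ≤ ((l + uncov.card : ℕ) : ℝ) := by
        exact_mod_cast hSEle.trans hScard
    _ = (l : ℝ) + (uncov.card : ℝ) := by push_cast; ring
    _ ≤ (l : ℝ) + ∑ X ∈ 𝒳, F X.card := by linarith
    _ = (l : ℝ) + ∑ i ∈ Finset.Icc 1 (t + 1), (n.choose i : ℝ) * F i := by rw [hgroup]
    _ = _ := by rw [hF]
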